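/- Fix p ≥ 2 and let C_p be the maximal cardinality of a set of points on S^{p−1} that are pairwise separated by geodesic distance at least π/6. Let A ⊆ ℝ^p be compact and x ∉ A with A nonempty. Then there exist points x₁, …, x_n ∈ A with n ≤ C_p such that for every decreasing function f : (0,∞) → ℝ and every y ∈ A: f(|x − y|) ≤ max_{1 ≤ j ≤ n} f(|x_j − y|). Equivalently, for every y ∈ A there exists j with |x_j − y| ≤ |x − y|. -/
import Mathlib


open Set Metric
open scoped RealInnerProductSpace

/-- Maximal cardinality of a set of points of `S^{p-1}` that are pairwise separated
by geodesic distance (i.e. angle) at least `π/6`. -/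
noncomputable def maxSepPacking (p : ℕ) : ℕ :=
  sSup {n : ℕ | ∃ v : Fin n → EuclideanSpace ℝ (Fin p),
    (∀ i, ‖v i‖ = 1) ∧ ∀ i j, i ≠ j → Real.pi / 6 ≤ Real.arccos ⟪v i, v j⟫}

lemma maxSepPacking_bddAbove (p : ℕ) :
    BddAbove {n : ℕ | ∃ v : Fin n → EuclideanSpace ℝ (Fin p),
      (∀ i, ‖v i‖ = 1) ∧ ∀ i j, i ≠ j → Real.pi / 6 ≤ Real.arccos ⟪v i, v j⟫} := by
  obtain ⟨t, hts, htf, htc⟩ :=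
    (isCompact_sphere (0 : EuclideanSpace ℝ (Fin p)) 1).finite_cover_balls
      (e := 1/10) (by norm_num)
  haveI := htf.fintype
  refine ⟨htf.toFinset.card, fun n hn => ?_⟩
  obtain ⟨v, hv1, hvsep⟩ := hn
  have hmem : ∀ i, v i ∈ sphere (0 : EuclideanSpace ℝ (Fin p)) 1 := fun i => by
    simp [mem_sphere_zero_iff_norm, hv1 i]
  have hch : ∀ i : Fin n, ∃ c ∈ t, v i ∈ ball c (1/10) := fun i => by
    have := htc (hmem i); simpa using this
  choose c hc hcb using hch
  have hdist : ∀ i j, i ≠ j → (2 : ℝ) - Real.sqrt 3 ≤ dist (v i) (v j) ^ 2 := by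
    intro i j hij
    have hq := hvsep i j hij
    set q : ℝ := ⟪v i, v j⟫ with hqdef
    have habs : |q| ≤ 1 := by
      have := abs_real_inner_le_norm (v i) (v j)
      rwa [hv1 i, hv1 j, one_mul] at this
    have h1 : q ≤ Real.sqrt 3 / 2 := by
      have hc1 : Real.cos (Real.arccos q) ≤ Real.cos (Real.pi / 6) :=
        Real.cos_le_cos_of_nonneg_of_le_pi (by positivity) (Real.arccos_le_pi q) hq
      rwa [Real.cos_arccos (neg_le_of_abs_le habs) (le_of_abs_le habs),
        Real.cos_pi_div_six] at hc1
    have h2 : dist (v i) (v j) ^ 2 = 2 - 2 * q := by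
      rw [dist_eq_norm, norm_sub_sq_real, hv1 i, hv1 j]
      ring
    rw [h2]; linarith
  have hsqrt3 : Real.sqrt 3 ≤ 1.8 := by
    rw [show (1.8 : ℝ) = Real.sqrt (1.8 ^ 2) by rw [Real.sqrt_sq (by norm_num)]]
    apply Real.sqrt_le_sqrt; norm_num
  have hcinj : Function.Injective fun i : Fin n => (⟨c i, htf.mem_toFinset.2 (hc i)⟩ :
      {y // y ∈ htf.toFinset}) := by
    intro i j hij
    by_contra hne
    have hij' : c i = c j := congrArg Subtype.val hij
    have h1 : dist (v i) (v j) < 1/5 := by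
      calc dist (v i) (v j) ≤ dist (v i) (c i) + dist (c i) (v j) := dist_triangle _ _ _
        _ < 1/10 + 1/10 := by
            apply add_lt_add (mem_ball.1 (hcb i))
            rw [dist_comm, hij']; exact mem_ball.1 (hcb j)
        _ = 1/5 := by norm_num
    have h2 : dist (v i) (v j) ^ 2 < (1/5) ^ 2 := by
      apply sq_lt_sq' _ h1
      have := dist_nonneg (x := v i) (y := v j); linarith
    have h3 := hdist i j hne
    nlinarith
  calc n = Fintype.card (Fin n) := (Fintype.card_fin n).symm
    _ ≤ Fintype.card {y // y ∈ htf.toFinset} := Fintype.card_le_of_injective _ hcinj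
    _ = htf.toFinset.card := Fintype.card_coe _

lemma good_card_le (p : ℕ) (A : Set (EuclideanSpace ℝ (Fin p)))
    (x : EuclideanSpace ℝ (Fin p)) (hx : x ∉ A) (S : Finset (EuclideanSpace ℝ (Fin p)))
    (hSA : ∀ s ∈ S, s ∈ A)
    (hsep : ∀ s ∈ S, ∀ t ∈ S, s ≠ t → dist x t ≤ dist s t) :
    S.card ≤ maxSepPacking p := by
  apply le_csSup (maxSepPacking_bddAbove p)
  set e : Fin S.card → EuclideanSpace ℝ (Fin p) := fun i => (S.equivFin.symm i : _) with he_def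
  have he : ∀ i, e i ∈ S := fun i => (S.equivFin.symm i).2
  have hne : ∀ i, e i - x ≠ 0 := fun i =>
    sub_ne_zero.2 (fun h => hx (h ▸ hSA _ (he i)))
  refine ⟨fun i => ‖e i - x‖⁻¹ • (e i - x), fun i => norm_smul_inv_norm (hne i), ?_⟩
  intro i j hij
  have hij' : e i ≠ e j := fun h => hij (S.equivFin.symm.injective (Subtype.ext h))
  set a := dist x (e i) with ha_def
  set b := dist x (e j) with hb_def
  set cc := dist (e i) (e j) with hc_def
  have ha : 0 < a := dist_pos.2 (fun h => hx (h ▸ hSA _ (he i)))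
  have hb : 0 < b := dist_pos.2 (fun h => hx (h ▸ hSA _ (he j)))
  have hac : a ≤ cc := by
    have := hsep (e j) (he j) (e i) (he i) hij'.symm
    rwa [dist_comm (e j) (e i)] at this
  have hbc : b ≤ cc := hsep (e i) (he i) (e j) (he j) hij'
  have hnormi : ‖e i - x‖ = a := by rw [ha_def, dist_comm, dist_eq_norm]
  have hnormj : ‖e j - x‖ = b := by rw [hb_def, dist_comm, dist_eq_norm]
  have hinner : ⟪e i - x, e j - x⟫ = (a^2 + b^2 - cc^2) / 2 := by
    have h := norm_sub_sq_real (e i - x) (e j - x)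
    have h2 : e i - x - (e j - x) = e i - e j := by abel
    rw [h2, hnormi, hnormj] at h
    have h3 : ‖e i - e j‖ = cc := by rw [hc_def, dist_eq_norm]
    rw [h3] at h
    linarith
  have hkey : a^2 + b^2 - cc^2 ≤ a * b := by
    nlinarith [mul_nonneg ha.le (sub_nonneg.2 hac), mul_nonneg hb.le (sub_nonneg.2 hbc),
      mul_nonneg (sub_nonneg.2 hac) (sub_nonneg.2 hbc)]
  have hq : ⟪‖e i - x‖⁻¹ • (e i - x), ‖e j - x‖⁻¹ • (e j - x)⟫ ≤ 1/2 := by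
    rw [real_inner_smul_left, real_inner_smul_right, hnormi, hnormj, hinner]
    have hXle : (a^2 + b^2 - cc^2)/2 ≤ a*b/2 := by linarith
    calc a⁻¹ * (b⁻¹ * ((a^2 + b^2 - cc^2)/2))
        ≤ a⁻¹ * (b⁻¹ * (a*b/2)) := by
          apply mul_le_mul_of_nonneg_left
            (mul_le_mul_of_nonneg_left hXle (by positivity)) (by positivity)
      _ = 1/2 := by field_simp
  have harcsin : Real.arcsin (⟪‖e i - x‖⁻¹ • (e i - x), ‖e j - x‖⁻¹ • (e j - x)⟫)
      ≤ Real.pi / 6 := by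
    have h12 : Real.arcsin (1/2 : ℝ) = Real.pi / 6 := by
      rw [← Real.sin_pi_div_six]
      exact Real.arcsin_sin (by linarith [Real.pi_pos]) (by linarith [Real.pi_pos])
    rw [← h12]
    exact Real.monotone_arcsin hq
  rw [Real.arccos_eq_pi_div_two_sub_arcsin]
  have hpi := Real.pi_pos
  linarith

lemma greedy (p : ℕ) (A : Set (EuclideanSpace ℝ (Fin p))) (hA : IsCompact A)
    (x : EuclideanSpace ℝ (Fin p)) (hx : x ∉ A) :
    ∀ k : ℕ, ∀ S : Finset (EuclideanSpace ℝ (Fin p)),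
      (∀ s ∈ S, s ∈ A) →
      (∀ s ∈ S, ∀ t ∈ S, s ≠ t → dist x t ≤ dist s t) →
      (∀ s ∈ S, ∀ z ∈ A, (∀ t ∈ S, dist x z ≤ dist t z) → dist x s ≤ dist x z) →
      maxSepPacking p + 1 ≤ S.card + k →
      ∃ S' : Finset (EuclideanSpace ℝ (Fin p)), (∀ s ∈ S', s ∈ A) ∧
        S'.card ≤ maxSepPacking p ∧ ∀ y ∈ A, ∃ s ∈ S', dist s y ≤ dist x y := by
  classical
  intro k
  induction k with
  | zero =>
    intro S hSA hsep _ hcard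
    have := good_card_le p A x hx S hSA hsep
    omega
  | succ k ih =>
    intro S hSA hsep hinv hcard
    by_cases hcov : ∀ y ∈ A, ∃ s ∈ S, dist s y ≤ dist x y
    · exact ⟨S, hSA, good_card_le p A x hx S hSA hsep, hcov⟩
    · push_neg at hcov
      obtain ⟨y, hyA, hy⟩ := hcov
      set K : Set (EuclideanSpace ℝ (Fin p)) :=
        {z | z ∈ A ∧ ∀ t ∈ S, dist x z ≤ dist t z} with hKdef
      have hKeq : K = A ∩ ⋂ t ∈ S, {z | dist x z ≤ dist t z} := by
        ext z; simp [hKdef]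
      have hKc : IsCompact K := by
        apply hA.of_isClosed_subset
        · rw [hKeq]
          exact hA.isClosed.inter (isClosed_biInter (fun t _ =>
            isClosed_le (continuous_const.dist continuous_id)
              (continuous_const.dist continuous_id)))
        · intro z hz; exact hz.1
      have hyK : y ∈ K := ⟨hyA, fun t ht => (hy t ht).le⟩
      obtain ⟨z₀, hz₀K, hz₀min⟩ := hKc.exists_isMinOn ⟨y, hyK⟩
        ((continuous_const.dist continuous_id).continuousOn (s := K))
      have hz₀min' : ∀ z ∈ K, dist x z₀ ≤ dist x z := fun z hz => hz₀min hz
      have hz₀A : z₀ ∈ A := hz₀K.1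
      have hz₀x : 0 < dist x z₀ := dist_pos.2 (fun h => hx (h ▸ hz₀A))
      have hz₀S : z₀ ∉ S := by
        intro h
        have := hz₀K.2 z₀ h
        simp at this
        exact (dist_pos.1 hz₀x) this
      have hcard' : (insert z₀ S).card = S.card + 1 := Finset.card_insert_of_notMem hz₀S
      apply ih (insert z₀ S)
      · intro s hs
        rcases Finset.mem_insert.1 hs with h | h
        · exact h ▸ hz₀A
        · exact hSA s h
      · intro s hs t ht hst
        rcases Finset.mem_insert.1 hs with h | h <;>
          rcases Finset.mem_insert.1 ht with h' | h'
        · exact absurd (h.trans h'.symm) hst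
        · -- s = z₀, t ∈ S : dist x t ≤ dist z₀ t
          rw [h]
          have h1 : dist x t ≤ dist x z₀ := hinv t h' z₀ hz₀A hz₀K.2
          have h2 : dist x z₀ ≤ dist t z₀ := hz₀K.2 t h'
          calc dist x t ≤ dist t z₀ := h1.trans h2
            _ = dist z₀ t := dist_comm _ _
        · -- s ∈ S, t = z₀
          rw [h']
          exact hz₀K.2 s h
        · exact hsep s h t h' hst
      · intro s hs z hzA hz
        have hzK : z ∈ K := ⟨hzA, fun t ht => hz t (Finset.mem_insert_of_mem ht)⟩
        rcases Finset.mem_insert.1 hs with h | h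
        · exact h ▸ hz₀min' z hzK
        · exact hinv s h z hzA (fun t ht => hz t (Finset.mem_insert_of_mem ht))
      · omega

theorem stmt15 (p : ℕ) (hp : 2 ≤ p) (A : Set (EuclideanSpace ℝ (Fin p)))
    (hA : IsCompact A) (hAne : A.Nonempty)
    (x : EuclideanSpace ℝ (Fin p)) (hx : x ∉ A) :
    ∃ (n : ℕ) (x' : Fin n → EuclideanSpace ℝ (Fin p)),
      n ≤ maxSepPacking p ∧ (∀ j, x' j ∈ A) ∧
      (∀ f : ℝ → ℝ, AntitoneOn f (Set.Ici 0) →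
        ∀ y ∈ A, ∃ j, f (dist x y) ≤ f (dist (x' j) y)) ∧
      (∀ y ∈ A, ∃ j, dist (x' j) y ≤ dist x y) := by
  obtain ⟨S', hS'A, hS'card, hS'cov⟩ := greedy p A hA x hx (maxSepPacking p + 1) ∅
    (by simp) (by simp) (by simp) (by simp)
  refine ⟨S'.card, fun j => (S'.equivFin.symm j : _), hS'card, fun j => hS'A _ (S'.equivFin.symm j).2, ?_, ?_⟩
  · intro f hf y hyA
    obtain ⟨s, hs, hsd⟩ := hS'cov y hyA
    refine ⟨S'.equivFin ⟨s, hs⟩, ?_⟩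
    simpa using hf (mem_Ici.2 dist_nonneg) (mem_Ici.2 dist_nonneg) hsd
  · intro y hyA
    obtain ⟨s, hs, hsd⟩ := hS'cov y hyA
    refine ⟨S'.equivFin ⟨s, hs⟩, ?_⟩
    simpa using hsd
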